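/- Let a, r be real numbers with 0 < r < a < 1, define G(x) = x + √((4 − a² + 2arx − r²)/(a² − 2arx + r²))·√(1 − x²), and set x₀ = (2r + a² + r²)/(2a(1 + r)). Then G(x₀) = (r + 2)/a. -/

import Mathlib

theorem stmt_13 (a r : ℝ) (hr : 0 < r) (hra : r < a) (ha : a < 1)
    (G : ℝ → ℝ)
    (hG : ∀ x, G x = x + Real.sqrt ((4 - a ^ 2 + 2 * a * r * x - r ^ 2) /
        (a ^ 2 - 2 * a * r * x + r ^ 2)) * Real.sqrt (1 - x ^ 2))
    (x₀ : ℝ) (hx₀ : x₀ = (2 * r + a ^ 2 + r ^ 2) / (2 * a * (1 + r))) :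
    G x₀ = (r + 2) / a := by
  have ha0 : 0 < a := hr.trans hra
  have h1r : (0:ℝ) < 1 + r := by linarith
  have hd : (0:ℝ) < 2 * a * (1 + r) := by positivity
  rw [hG, hx₀]
  set x := (2 * r + a ^ 2 + r ^ 2) / (2 * a * (1 + r)) with hx
  have hden : a ^ 2 - 2 * a * r * x + r ^ 2 = (a - r) * (a + r) / (1 + r) := by
    rw [hx]; field_simp; ring
  have hnum : 4 - a ^ 2 + 2 * a * r * x - r ^ 2
      = (r + 2 - a) * (r + 2 + a) / (1 + r) := by
    rw [hx]; field_simp; ring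
  have hB : 1 - x ^ 2
      = (2 + r - a) * (a - r) * ((a + r) * (a + r + 2)) / (2 * a * (1 + r)) ^ 2 := by
    rw [hx]; field_simp; ring
  have hA : (4 - a ^ 2 + 2 * a * r * x - r ^ 2) / (a ^ 2 - 2 * a * r * x + r ^ 2)
      = ((r + 2 - a) * (r + 2 + a)) / ((a - r) * (a + r)) := by
    rw [hden, hnum]
    have har : (0:ℝ) < (a - r) * (a + r) := by nlinarith
    field_simp
  have hc : (0:ℝ) < ((r + 2) ^ 2 - a ^ 2) / (2 * a * (1 + r)) := by
    apply div_pos _ hd; nlinarith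
  have hAnn : (0:ℝ) ≤ ((r + 2 - a) * (r + 2 + a)) / ((a - r) * (a + r)) := by
    apply div_nonneg <;> nlinarith
  have key : Real.sqrt ((4 - a ^ 2 + 2 * a * r * x - r ^ 2) /
        (a ^ 2 - 2 * a * r * x + r ^ 2)) * Real.sqrt (1 - x ^ 2)
      = ((r + 2) ^ 2 - a ^ 2) / (2 * a * (1 + r)) := by
    rw [hA, hB, ← Real.sqrt_mul hAnn]
    rw [show ((r + 2 - a) * (r + 2 + a)) / ((a - r) * (a + r)) *
        ((2 + r - a) * (a - r) * ((a + r) * (a + r + 2)) / (2 * a * (1 + r)) ^ 2)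
        = (((r + 2) ^ 2 - a ^ 2) / (2 * a * (1 + r))) ^ 2 by
      have h2 : (a - r) * (a + r) ≠ 0 := by nlinarith
      have h3 : a - r ≠ 0 := sub_ne_zero.mpr (ne_of_gt hra)
      have h4 : a + r ≠ 0 := (by linarith : (0:ℝ) < a + r).ne'
      field_simp
      ring]
    exact Real.sqrt_sq hc.le
  rw [key, hx]
  field_simp
  ring
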